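/- Automatic complexity does not increase under automatic O(1)-valued maps: if S is an automatic description mode, then for every automatic description mode R there exists an automatic description mode R' such that K_{R'}(y) ≤ K_R(x) whenever (x,y) ∈ S. -/

import Mathlib

/-- A finite automaton: a finite directed graph whose edges are labeled by pairs
of an optional input letter and an optional output letter (`none` = ε). -/
structure Automaton (A B : Type*) where
  n : ℕ
  edges : List (Fin n × (Option A × Option B) × Fin n)

namespace Automaton

/-- `Reads G s t u v` : along some directed path from `s` to `t` one reads the
pair of strings `(u, v)` (concatenating labels, ε contributing nothing). -/
inductive Reads {A B : Type*} (G : Automaton A B) :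
    Fin G.n → Fin G.n → List A → List B → Prop
  | nil (s : Fin G.n) : Reads G s s [] []
  | step {s t r : Fin G.n} {a : Option A} {b : Option B} {u : List A} {v : List B} :
      (s, (a, b), t) ∈ G.edges → Reads G t r u v →
      Reads G s r (a.toList ++ u) (b.toList ++ v)

/-- The relation realized by the automaton: pairs readable along some directed
path, with arbitrary start and end states. -/
def Rel {A B : Type*} (G : Automaton A B) (u : List A) (v : List B) : Prop :=
  ∃ s t : Fin G.n, G.Reads s t u v

end Automaton

/-- A relation is automatic if it is realized by some automaton. -/
def IsAutomatic {A B : Type*} (R : List A → List B → Prop) : Prop :=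
  ∃ G : Automaton A B, ∀ u v, R u v ↔ G.Rel u v

/-- `R` is O(1)-valued: some constant bounds the number of strings related to any `p`. -/
def BoundedValued {A B : Type*} (R : List A → List B → Prop) : Prop :=
  ∃ c : ℕ, ∀ p, {x | R p x}.Finite ∧ {x | R p x}.ncard ≤ c

/-- An automatic description mode: an O(1)-valued automatic relation on binary strings. -/
def IsDescriptionMode (R : List Bool → List Bool → Prop) : Prop :=
  IsAutomatic R ∧ BoundedValued R

/-- Automatic Kolmogorov complexity: minimal length of a description of `x`
(`⊤` if there is none). -/
noncomputable def autK (R : List Bool → List Bool → Prop) (x : List Bool) : ℕ∞ :=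
  sInf {n : ℕ∞ | ∃ p : List Bool, R p x ∧ n = p.length}

section Comp

variable {A B C : Type*} [DecidableEq B]

namespace Automaton

/-- Product (composition) automaton. -/
def comp (G : Automaton A B) (H : Automaton B C) : Automaton A C where
  n := G.n * H.n
  edges :=
    (G.edges.flatMap fun x => H.edges.filterMap fun y =>
      if x.2.1.2 = y.2.1.1 then
        some (finProdFinEquiv (x.1, y.1), (x.2.1.1, y.2.1.2),
          finProdFinEquiv (x.2.2, y.2.2))
      else none)
    ++ (G.edges.flatMap fun x =>
      if x.2.1.2 = (none : Option B) then
        (List.finRange H.n).map fun s' =>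
          (finProdFinEquiv (x.1, s'), (x.2.1.1, (none : Option C)),
            finProdFinEquiv (x.2.2, s'))
      else [])
    ++ (H.edges.flatMap fun y =>
      if y.2.1.1 = (none : Option B) then
        (List.finRange G.n).map fun s =>
          (finProdFinEquiv (s, y.1), ((none : Option A), y.2.1.2),
            finProdFinEquiv (s, y.2.2))
      else [])

variable {G : Automaton A B} {H : Automaton B C}

lemma mem_comp_sync {s t : Fin G.n} {s' t' : Fin H.n} {a : Option A} {b : Option B}
    {c : Option C} (hG : (s, (a, b), t) ∈ G.edges) (hH : (s', (b, c), t') ∈ H.edges) :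
    (finProdFinEquiv (s, s'), (a, c), finProdFinEquiv (t, t')) ∈ (comp G H).edges := by
  refine List.mem_append.2 (Or.inl (List.mem_append.2 (Or.inl ?_)))
  refine List.mem_flatMap.2 ⟨_, hG, List.mem_filterMap.2 ⟨_, hH, ?_⟩⟩
  simp

lemma mem_comp_epsG {s t : Fin G.n} {a : Option A}
    (hG : (s, (a, (none : Option B)), t) ∈ G.edges) (s' : Fin H.n) :
    (finProdFinEquiv (s, s'), (a, (none : Option C)), finProdFinEquiv (t, s'))
      ∈ (comp G H).edges := by
  refine List.mem_append.2 (Or.inl (List.mem_append.2 (Or.inr ?_)))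
  refine List.mem_flatMap.2 ⟨_, hG, ?_⟩
  simp

lemma mem_comp_epsH {s' t' : Fin H.n} {c : Option C}
    (hH : (s', ((none : Option B), c), t') ∈ H.edges) (s : Fin G.n) :
    (finProdFinEquiv (s, s'), ((none : Option A), c), finProdFinEquiv (s, t'))
      ∈ (comp G H).edges := by
  refine List.mem_append.2 (Or.inr ?_)
  refine List.mem_flatMap.2 ⟨_, hH, ?_⟩
  simp

lemma mem_comp_elim {x : Fin (comp G H).n × (Option A × Option C) × Fin (comp G H).n}
    (hx : x ∈ (comp G H).edges) :
    ∃ (s t : Fin G.n) (s' t' : Fin H.n) (a : Option A) (c : Option C),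
      x = (finProdFinEquiv (s, s'), (a, c), finProdFinEquiv (t, t')) ∧
      ((∃ b : Option B, (s, (a, b), t) ∈ G.edges ∧ (s', (b, c), t') ∈ H.edges) ∨
       ((s, (a, (none : Option B)), t) ∈ G.edges ∧ c = none ∧ t' = s') ∨
       ((s', ((none : Option B), c), t') ∈ H.edges ∧ a = none ∧ t = s)) := by
  rcases List.mem_append.1 hx with hx | hx
  · rcases List.mem_append.1 hx with hx | hx
    · rcases List.mem_flatMap.1 hx with ⟨⟨s, ⟨a, b⟩, t⟩, hG, hx⟩
      rcases List.mem_filterMap.1 hx with ⟨⟨s', ⟨b', c⟩, t'⟩, hH, hx⟩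
      by_cases hb : b = b'
      · rw [if_pos hb] at hx
        replace hx := Option.some.inj hx
        exact ⟨s, t, s', t', a, c, hx.symm, Or.inl ⟨b', hb ▸ hG, hH⟩⟩
      · simp [hb] at hx
    · rcases List.mem_flatMap.1 hx with ⟨⟨s, ⟨a, b⟩, t⟩, hG, hx⟩
      by_cases hb : b = (none : Option B)
      · rw [if_pos hb] at hx
        rcases List.mem_map.1 hx with ⟨s', -, hx⟩
        exact ⟨s, t, s', s', a, none, hx.symm, Or.inr (Or.inl ⟨hb ▸ hG, rfl, rfl⟩)⟩
      · simp [hb] at hx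
        cases hx
  · rcases List.mem_flatMap.1 hx with ⟨⟨s', ⟨b, c⟩, t'⟩, hH, hx⟩
    by_cases hb : b = (none : Option B)
    · rw [if_pos hb] at hx
      rcases List.mem_map.1 hx with ⟨s, -, hx⟩
      exact ⟨s, s, s', t', none, c, hx.symm, Or.inr (Or.inr ⟨hb ▸ hH, rfl, rfl⟩)⟩
    · simp [hb] at hx
      cases hx

lemma Reads.trans {A B : Type*} {G : Automaton A B} {s m t : Fin G.n}
    {u₁ u₂ : List A} {v₁ v₂ : List B} (h₁ : G.Reads s m u₁ v₁)
    (h₂ : G.Reads m t u₂ v₂) : G.Reads s t (u₁ ++ u₂) (v₁ ++ v₂) := by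
  induction h₁ with
  | nil => simpa using h₂
  | step he _ ih =>
    rw [List.append_assoc, List.append_assoc]
    exact Reads.step he (ih h₂)

/-- Lifting ε-input readings of `H` into the product (the `G`-state stays fixed). -/
lemma reads_comp_eps {s' t' : Fin H.n} {v : List B} {w : List C}
    (h : H.Reads s' t' v w) (hv : v = []) (s : Fin G.n) :
    (comp G H).Reads (finProdFinEquiv (s, s')) (finProdFinEquiv (s, t')) [] w := by
  induction h with
  | nil => exact Reads.nil _
  | @step p q r b c u v' he _ ih =>
    rcases List.append_eq_nil_iff.1 hv with ⟨hb, hu⟩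
    cases b with
    | some b0 => simp at hb
    | none =>
      have := Reads.step (A := A) (mem_comp_epsH he s) (ih hu)
      simpa using this

/-- Inversion for readings whose input starts with a letter. -/
lemma reads_cons_inv {s' t' : Fin H.n} {xs : List B} {w : List C}
    (h : H.Reads s' t' xs w) :
    ∀ (b0 : B) (v' : List B), xs = b0 :: v' →
      ∃ (s'' t'' : Fin H.n) (c : Option C) (w₁ w₂ : List C),
        H.Reads s' s'' [] w₁ ∧ (s'', (some b0, c), t'') ∈ H.edges ∧
        H.Reads t'' t' v' w₂ ∧ w = w₁ ++ c.toList ++ w₂ := by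
  induction h with
  | nil => intro b0 v' hx; simp at hx
  | @step p q r a c u v he hr ih =>
    intro b0 v' hx
    cases a with
    | some a0 =>
      simp only [Option.toList_some, List.cons_append, List.nil_append,
        List.cons.injEq] at hx
      rcases hx with ⟨ha, hu⟩
      subst ha; subst hu
      exact ⟨p, q, c, [], v, Reads.nil _, he, hr, by simp⟩
    | none =>
      simp only [Option.toList_none, List.nil_append] at hx
      rcases ih b0 v' hx with ⟨s'', t'', c', w₁, w₂, hε, hedge, hrest, hw⟩
      refine ⟨s'', t'', c', c.toList ++ w₁, w₂, ?_, hedge, hrest, by simp [hw]⟩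
      have := Reads.step he hε
      simpa using this

/-- Completeness of the product construction. -/
lemma reads_comp {s t : Fin G.n} {u : List A} {v : List B}
    (hG : G.Reads s t u v) :
    ∀ (s' t' : Fin H.n) (w : List C), H.Reads s' t' v w →
      (comp G H).Reads (finProdFinEquiv (s, s')) (finProdFinEquiv (t, t')) u w := by
  induction hG with
  | nil p => intro s' t' w hH; exact reads_comp_eps hH rfl p
  | @step p q r a b u' v' he hr ih =>
    intro s' t' w hH
    cases b with
    | none =>
      simp only [Option.toList_none, List.nil_append] at hH
      have := Reads.step (mem_comp_epsG he s') (ih s' t' w hH)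
      simpa using this
    | some b0 =>
      simp only [Option.toList_some, List.cons_append, List.nil_append] at hH
      rcases reads_cons_inv hH b0 v' rfl with ⟨s'', t'', c, w₁, w₂, hε, hedge, hrest, hw⟩
      have h1 : (comp G H).Reads (finProdFinEquiv (p, s')) (finProdFinEquiv (p, s'')) [] w₁ :=
        reads_comp_eps hε rfl p
      have h2 : (comp G H).Reads (finProdFinEquiv (p, s'')) (finProdFinEquiv (r, t'))
          (a.toList ++ u') (c.toList ++ w₂) :=
        Reads.step (mem_comp_sync he hedge) (ih t'' t' w₂ hrest)
      have := h1.trans h2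
      simpa [hw] using this

/-- Soundness of the product construction. -/
lemma comp_reads_sound {p q : Fin (comp G H).n} {u : List A} {w : List C}
    (h : (comp G H).Reads p q u w) :
    ∃ v : List B,
      G.Reads (finProdFinEquiv.symm p).1 (finProdFinEquiv.symm q).1 u v ∧
      H.Reads (finProdFinEquiv.symm p).2 (finProdFinEquiv.symm q).2 v w := by
  induction h with
  | nil p => exact ⟨[], Reads.nil _, Reads.nil _⟩
  | @step p q r a c u w he hr ih =>
    rcases mem_comp_elim he with ⟨s, t, s', t', a', c', hx, hcase⟩
    obtain ⟨h1, h2⟩ := Prod.mk.inj hx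
    obtain ⟨h3, h4⟩ := Prod.mk.inj h2
    have hx := And.intro h1 (And.intro (Prod.mk.inj h3) h4)
    obtain ⟨rfl, ⟨rfl, rfl⟩, rfl⟩ := hx
    rcases ih with ⟨v, hGv, hHv⟩
    simp only [Equiv.symm_apply_apply] at hGv hHv ⊢
    rcases hcase with ⟨b, hGe, hHe⟩ | ⟨hGe, rfl, rfl⟩ | ⟨hHe, rfl, rfl⟩
    · exact ⟨b.toList ++ v, Reads.step hGe hGv, Reads.step hHe hHv⟩
    · refine ⟨v, ?_, by simpa using hHv⟩
      have := Reads.step hGe hGv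
      simpa using this
    · refine ⟨v, by simpa using hGv, ?_⟩
      have := Reads.step hHe hHv
      simpa using this

lemma comp_rel {u : List A} {w : List C} :
    (comp G H).Rel u w ↔ ∃ v : List B, G.Rel u v ∧ H.Rel v w := by
  constructor
  · rintro ⟨p, q, h⟩
    rcases comp_reads_sound h with ⟨v, h1, h2⟩
    exact ⟨v, ⟨_, _, h1⟩, ⟨_, _, h2⟩⟩
  · rintro ⟨v, ⟨s, t, h1⟩, ⟨s', t', h2⟩⟩
    exact ⟨_, _, reads_comp h1 s' t' w h2⟩

end Automaton
end Comp

/-- Automatic complexity does not increase under automatic O(1)-valued maps. -/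
theorem autK_noincrease_under_mode (S : List Bool → List Bool → Prop)
    (hS : IsDescriptionMode S) (R : List Bool → List Bool → Prop)
    (hR : IsDescriptionMode R) :
    ∃ R' : List Bool → List Bool → Prop, IsDescriptionMode R' ∧
      ∀ x y : List Bool, S x y → autK R' y ≤ autK R x := by
  obtain ⟨⟨GS, hGS⟩, cS, hbS⟩ := hS
  obtain ⟨⟨GR, hGR⟩, cR, hbR⟩ := hR
  refine ⟨fun p y => ∃ x, R p x ∧ S x y, ⟨⟨GR.comp GS, ?_⟩, ?_⟩, ?_⟩
  · intro u v
    rw [Automaton.comp_rel]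
    exact exists_congr fun x => and_congr (hGR u x) (hGS x v)
  · refine ⟨cR * cS, fun p => ?_⟩
    have hset : {y | ∃ x, R p x ∧ S x y} = ⋃ x ∈ {x | R p x}, {y | S x y} := by
      ext y; simp
    have hfin : {y | ∃ x, R p x ∧ S x y}.Finite := by
      rw [hset]
      exact Set.Finite.biUnion (hbR p).1 fun x _ => (hbS x).1
    refine ⟨hfin, ?_⟩
    classical
    have hsub : {y | ∃ x, R p x ∧ S x y} ⊆
        ↑((hbR p).1.toFinset.biUnion fun x => (hbS x).1.toFinset) := by
      intro y hy
      rcases hy with ⟨x, hx, hxy⟩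
      simp only [Finset.coe_biUnion, Set.mem_iUnion, Finset.mem_coe,
        Set.Finite.mem_toFinset]
      exact ⟨x, hx, hxy⟩
    calc {y | ∃ x, R p x ∧ S x y}.ncard
        ≤ (((hbR p).1.toFinset.biUnion fun x => (hbS x).1.toFinset) : Finset (List Bool)).card := by
          have h := Set.ncard_le_ncard hsub
            (((hbR p).1.toFinset.biUnion fun x => (hbS x).1.toFinset).finite_toSet)
          rwa [Set.ncard_coe_finset] at h
      _ ≤ ∑ x ∈ (hbR p).1.toFinset, ((hbS x).1.toFinset).card :=
          Finset.card_biUnion_le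
      _ ≤ ∑ _x ∈ (hbR p).1.toFinset, cS := by
          refine Finset.sum_le_sum fun x _ => ?_
          have := (hbS x).2
          rwa [Set.ncard_eq_toFinset_card _ (hbS x).1] at this
      _ = (hbR p).1.toFinset.card * cS := by
          rw [Finset.sum_const, smul_eq_mul]
      _ ≤ cR * cS := by
          have := (hbR p).2
          rw [Set.ncard_eq_toFinset_card _ (hbR p).1] at this
          exact Nat.mul_le_mul_right _ this
  · intro x y hxy
    apply sInf_le_sInf
    rintro n ⟨p, hp, rfl⟩
    exact ⟨p, ⟨x, hp, hxy⟩, rfl⟩
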